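/- Let n ≥ 1 and k, l ≥ 0 be integers with n ≤ l + k and n ≡ l + k (mod 2). For every (l+k)\n-partition α, the linear map H_α : (ℝⁿ)^{⊗k} → (ℝⁿ)^{⊗l} is SO(n)-equivariant. -/

import Mathlib

open Matrix Finset

noncomputable section

/-- The matrix of `g^{⊗k}` in the standard basis of `(ℝⁿ)^{⊗k}`. -/
def tpowM {n : ℕ} (k : ℕ) (g : Matrix (Fin n) (Fin n) ℝ) :
    Matrix (Fin k → Fin n) (Fin k → Fin n) ℝ :=
  Matrix.of fun I J => ∏ r, g (I r) (J r)

/-- Equivariance for the set of matrices satisfying `P`. -/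
def IsGEquiv {n : ℕ} (k l : ℕ) (P : Matrix (Fin n) (Fin n) ℝ → Prop)
    (φ : ((Fin k → Fin n) → ℝ) →ₗ[ℝ] ((Fin l → Fin n) → ℝ)) : Prop :=
  ∀ g : Matrix (Fin n) (Fin n) ℝ, P g →
    φ ∘ₗ (tpowM k g).mulVecLin = (tpowM l g).mulVecLin ∘ₗ φ

/-- An `(N)\\n`-partition: a choice of `n` "free" elements of `{1, …, N}` together
with a partition of the remaining `N - n` elements into disjoint pairs; the pairing
is encoded as an involution fixing exactly the free elements, whose nontrivial
orbits `{p, pair p}` are the blocks. -/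
structure GroodPartition (N n : ℕ) where
  free : Finset (Fin N)
  card_free : free.card = n
  pair : Fin N → Fin N
  invol : ∀ p, pair (pair p) = p
  fixed_iff_free : ∀ p, pair p = p ↔ p ∈ free

/-- The free elements of `α`, listed in increasing order.  (Since every free
element of the top row precedes every free element of the bottom row, this is the
list `t₁, …, t_s, b₁, …, b_{n-s}`.) -/
def GroodPartition.sorted {N n : ℕ} (α : GroodPartition N n) : Fin n → Fin N :=
  fun r => (α.free.sort (· ≤ ·)).get
    (Fin.cast (by rw [Finset.length_sort, α.card_free]) r)

/-- `χ(c_{t₁}, …, c_{t_s}, c_{b₁}, …, c_{b_{n-s}})`: zero if the indices attached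
to the free vertices are not distinct, and otherwise the sign of the permutation
of `[n]` they determine.  This is exactly the determinant of the corresponding
"would-be permutation" 0/1 matrix. -/
def chiDet {N n : ℕ} (α : GroodPartition N n) (c : Fin N → Fin n) : ℝ :=
  Matrix.det (Matrix.of fun a r : Fin n => if c (α.sorted r) = a then (1 : ℝ) else 0)

/-- The matrix `H_α` of an `(l+k)\\n`-partition `α`: the `(I,J)` entry is
`χ(c_{t₁},…,c_{b_{n-s}}) ⬝ ∏_{{p,q} a pair of α} δ_{c_p, c_q}` where `c = I ⌢ J`. -/
def groodMatrix (n k l : ℕ) (α : GroodPartition (l + k) n) :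
    Matrix (Fin l → Fin n) (Fin k → Fin n) ℝ :=
  Matrix.of fun I J =>
    chiDet α (Fin.append I J) *
      ∏ p ∈ Finset.univ.filter (fun p => p ∉ α.free ∧ p < α.pair p),
        if Fin.append I J p = Fin.append I J (α.pair p) then (1 : ℝ) else 0


lemma chi_sum {n : ℕ} (g : Matrix (Fin n) (Fin n) ℝ) (e : Fin n → Fin n) :
    ∑ d : Fin n → Fin n,
      (Matrix.of fun a r : Fin n => if d r = a then (1:ℝ) else 0).det * ∏ r, g (d r) (e r)
    = g.det * (Matrix.of fun a r : Fin n => if e r = a then (1:ℝ) else 0).det := by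
  have hkey : ∀ d : Fin n → Fin n,
      (Matrix.of fun a r : Fin n => if d r = a then (1:ℝ) else 0).det * ∏ r, g (d r) (e r)
      = Matrix.detRowAlternating (fun r a : Fin n => if d r = a then g a (e r) else 0) := by
    intro d
    have h1 : (Matrix.of fun a r : Fin n => if d r = a then (1:ℝ) else 0).det
        = (Matrix.of fun r a : Fin n => if d r = a then (1:ℝ) else 0).det := by
      rw [← Matrix.det_transpose]; rfl
    rw [h1, mul_comm,
      ← Matrix.det_mul_column (fun r => g (d r) (e r))
        (Matrix.of fun r a : Fin n => if d r = a then (1:ℝ) else 0)]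
    have h4 : (Matrix.of fun i j : Fin n =>
        g (d i) (e i) * (Matrix.of fun r a : Fin n => if d r = a then (1:ℝ) else 0) i j)
        = Matrix.of (fun r a : Fin n => if d r = a then g a (e r) else 0) := by
      ext r a
      by_cases h : d r = a <;> simp [h]
    rw [h4]; rfl
  simp only [hkey]
  have h5 := MultilinearMap.map_sum
    (Matrix.detRowAlternating (R := ℝ) (n := Fin n)).toMultilinearMap
    (fun (r : Fin n) (b : Fin n) => fun a : Fin n => if b = a then g a (e r) else 0)
  simp only [AlternatingMap.coe_multilinearMap] at h5
  rw [← h5]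
  have h3 : (fun r : Fin n => ∑ b : Fin n, fun a : Fin n => if b = a then g a (e r) else 0)
      = fun r a : Fin n => g a (e r) := by
    funext r a
    simp [Finset.sum_apply, Finset.sum_ite_eq]
  rw [h3]
  have h6 : (Matrix.of fun a r : Fin n => g a (e r))
      = g * Matrix.of (fun a r : Fin n => if e r = a then (1:ℝ) else 0) := by
    ext a r
    simp [Matrix.mul_apply, mul_ite]
  calc Matrix.detRowAlternating (fun r a : Fin n => g a (e r))
      = ((Matrix.of fun a r : Fin n => g a (e r))ᵀ).det := rfl
    _ = (Matrix.of fun a r : Fin n => g a (e r)).det := Matrix.det_transpose _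
    _ = _ := by rw [h6, Matrix.det_mul]



namespace GroodPartition
variable {N n : ℕ} (α : GroodPartition N n)

lemma pair_ne {p : Fin N} (hp : p ∉ α.free) : α.pair p ≠ p :=
  fun h => hp ((α.fixed_iff_free p).1 h)

lemma pair_not_free {p : Fin N} (hp : p ∉ α.free) : α.pair p ∉ α.free := by
  intro h
  have h1 : α.pair (α.pair p) = α.pair p := (α.fixed_iff_free _).2 h
  rw [α.invol] at h1
  exact hp ((α.fixed_iff_free p).1 h1.symm)

lemma sorted_mem (r : Fin n) : α.sorted r ∈ α.free := by
  have : α.sorted r ∈ α.free.sort (· ≤ ·) := List.get_mem _ _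
  rwa [Finset.mem_sort] at this

lemma sorted_inj : Function.Injective α.sorted := by
  intro r s h
  have hnd : (α.free.sort (· ≤ ·)).Nodup := α.free.sort_nodup (· ≤ ·)
  have := List.nodup_iff_injective_get.1 hnd h
  exact Fin.cast_injective _ (by exact this)

noncomputable def sortedEquiv : Fin n ≃ {p // p ∈ α.free} :=
  Equiv.ofBijective (fun r => ⟨α.sorted r, α.sorted_mem r⟩)
    ((Fintype.bijective_iff_injective_and_card _).2
      ⟨fun r s h => α.sorted_inj (congrArg Subtype.val h),
        by simp [Fintype.card_coe, α.card_free]⟩)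

end GroodPartition

namespace GroodPartition
variable {N n : ℕ} (α : GroodPartition N n)

def pr (q : {p : Fin N // p ∉ α.free}) : {p : Fin N // p ∉ α.free} :=
  ⟨α.pair q.1, α.pair_not_free q.2⟩

noncomputable def S' : Finset {p : Fin N // p ∉ α.free} :=
  Finset.univ.filter (fun q => q.1 < α.pair q.1)

lemma pr_pr (q : {p : Fin N // p ∉ α.free}) : α.pr (α.pr q) = q :=
  Subtype.ext (α.invol q.1)

lemma mem_S' {q : {p : Fin N // p ∉ α.free}} : q ∈ α.S' ↔ q.1 < α.pair q.1 := by
  simp [S']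

lemma pr_mem_S' {q : {p : Fin N // p ∉ α.free}} (h : q ∉ α.S') : α.pr q ∈ α.S' := by
  rw [mem_S'] at h ⊢
  show (α.pair q.1) < α.pair (α.pair q.1)
  rw [α.invol]
  rcases lt_or_gt_of_ne (α.pair_ne q.2) with h1 | h1
  · exact h1
  · exact absurd h1 h

lemma pr_not_mem_S' {q : {p : Fin N // p ∉ α.free}} (h : q ∈ α.S') : α.pr q ∉ α.S' := by
  rw [mem_S'] at h ⊢
  show ¬ (α.pair q.1) < α.pair (α.pair q.1)
  rw [α.invol]
  exact not_lt.2 h.le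

lemma pr_injective : Function.Injective α.pr := by
  intro a b h
  have := congrArg α.pr h
  rwa [α.pr_pr, α.pr_pr] at this

lemma union_S' : α.S' ∪ α.S'.image α.pr = Finset.univ := by
  ext q
  simp only [Finset.mem_union, Finset.mem_image, Finset.mem_univ, iff_true]
  by_cases h : q ∈ α.S'
  · exact Or.inl h
  · exact Or.inr ⟨α.pr q, α.pr_mem_S' h, α.pr_pr q⟩

lemma disj_S' : Disjoint α.S' (α.S'.image α.pr) := by
  rw [Finset.disjoint_right]
  intro q hq
  obtain ⟨b, hb, rfl⟩ := Finset.mem_image.1 hq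
  exact α.pr_not_mem_S' hb

lemma prod_pairs {M : Type*} [CommMonoid M] (h : {p : Fin N // p ∉ α.free} → M) :
    ∏ q, h q = ∏ q ∈ α.S', (h q * h (α.pr q)) := by
  rw [Finset.prod_mul_distrib, ← Finset.prod_image
    (fun a _ b _ hab => α.pr_injective hab), ← Finset.prod_union α.disj_S', α.union_S']

lemma card_nonfree : Fintype.card {p : Fin N // p ∉ α.free} = α.S'.card + α.S'.card := by
  rw [← Finset.card_univ, ← α.union_S', Finset.card_union_of_disjoint α.disj_S',
    Finset.card_image_of_injective _ α.pr_injective]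

end GroodPartition

namespace GroodPartition
variable {N n : ℕ} (α : GroodPartition N n)

noncomputable def e2f (f : {p : Fin N // p ∉ α.free} → Fin n) :
    {q : {p : Fin N // p ∉ α.free} // q ∈ α.S'} → Fin n × Fin n :=
  fun q' => (f q'.1, f (α.pr q'.1))

lemma e2f_bij : Function.Bijective (α.e2f (n := n)) := by
  rw [Fintype.bijective_iff_injective_and_card]
  constructor
  · intro f f' h
    funext q
    by_cases hq : q ∈ α.S'
    · exact congrArg Prod.fst (congrFun h ⟨q, hq⟩)
    · have h2 := congrArg Prod.snd (congrFun h ⟨α.pr q, α.pr_mem_S' hq⟩)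
      simpa [e2f, α.pr_pr] using h2
  · rw [Fintype.card_fun, Fintype.card_fun, Fintype.card_coe, Fintype.card_prod,
      Fintype.card_fin, α.card_nonfree, pow_add, mul_pow]

lemma delta_side (g : Matrix (Fin n) (Fin n) ℝ) (hg : gᵀ * g = 1)
    (c : {p : Fin N // p ∉ α.free} → Fin n) :
    ∑ f : {p : Fin N // p ∉ α.free} → Fin n,
      (∏ q ∈ α.S', if f q = f (α.pr q) then (1:ℝ) else 0) * ∏ q, g (f q) (c q)
    = ∏ q ∈ α.S', if c q = c (α.pr q) then (1:ℝ) else 0 := by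
  have hpair : ∀ x y : Fin n, ∑ a, g a x * g a y = if x = y then (1:ℝ) else 0 := by
    intro x y
    have h1 := congrFun (congrFun hg x) y
    rw [Matrix.mul_apply] at h1
    simp only [Matrix.transpose_apply] at h1
    rw [h1, Matrix.one_apply]
  set W : {q : {p : Fin N // p ∉ α.free} // q ∈ α.S'} → Fin n × Fin n → ℝ :=
    fun q' y => (if y.1 = y.2 then (1:ℝ) else 0) *
      (g y.1 (c q'.1) * g y.2 (c (α.pr q'.1))) with hW
  have hsum : ∀ f : {p : Fin N // p ∉ α.free} → Fin n,
      (∏ q ∈ α.S', if f q = f (α.pr q) then (1:ℝ) else 0) * ∏ q, g (f q) (c q)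
      = ∏ q' : {q : {p : Fin N // p ∉ α.free} // q ∈ α.S'}, W q' (α.e2f f q') := by
    intro f
    rw [α.prod_pairs (fun q => g (f q) (c q)), ← Finset.prod_mul_distrib,
      ← Finset.prod_coe_sort]
    rfl
  simp only [hsum]
  rw [Fintype.sum_bijective _ α.e2f_bij _
    (fun h => ∏ q' : {q : {p : Fin N // p ∉ α.free} // q ∈ α.S'}, W q' (h q'))
    (fun f => rfl)]
  have hps := Finset.prod_univ_sum
    (fun _ : {q : {p : Fin N // p ∉ α.free} // q ∈ α.S'} => (Finset.univ : Finset (Fin n × Fin n)))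
    (fun q' y => W q' y)
  rw [Fintype.piFinset_univ] at hps
  rw [← hps]
  have hone : ∀ q' : {q : {p : Fin N // p ∉ α.free} // q ∈ α.S'},
      ∑ y : Fin n × Fin n, W q' y = if c q'.1 = c (α.pr q'.1) then (1:ℝ) else 0 := by
    intro q'
    rw [Fintype.sum_prod_type]
    have : ∀ a : Fin n, ∑ b : Fin n, W q' (a, b) = g a (c q'.1) * g a (c (α.pr q'.1)) := by
      intro a
      simp [hW, ite_mul, Finset.sum_ite_eq]
    simp only [this]
    have := hpair (c q'.1) (c (α.pr q'.1))
    simp only [← this]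
  simp only [hone]
  exact Finset.prod_coe_sort α.S' (fun q => if c q = c (α.pr q) then (1:ℝ) else 0)
end GroodPartition

namespace GroodPartition
variable {N n : ℕ} (α : GroodPartition N n)

lemma chi_side (g : Matrix (Fin n) (Fin n) ℝ) (c : Fin N → Fin n) :
    ∑ f : {p : Fin N // p ∈ α.free} → Fin n,
      (Matrix.of fun a r : Fin n => if f (α.sortedEquiv r) = a then (1:ℝ) else 0).det *
        ∏ q, g (f q) (c q.1)
    = g.det * (Matrix.of fun a r : Fin n => if c (α.sorted r) = a then (1:ℝ) else 0).det := by
  rw [← Equiv.sum_comp (Equiv.arrowCongr α.sortedEquiv (Equiv.refl (Fin n)))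
    (fun f : {p : Fin N // p ∈ α.free} → Fin n =>
      (Matrix.of fun a r : Fin n => if f (α.sortedEquiv r) = a then (1:ℝ) else 0).det *
        ∏ q, g (f q) (c q.1))]
  rw [← chi_sum g (fun r => c (α.sorted r))]
  apply Finset.sum_congr rfl
  intro d _
  congr 1
  · congr 1
    ext a r
    simp [Equiv.arrowCongr]
  · rw [← Equiv.prod_comp α.sortedEquiv
      (fun q => g ((Equiv.arrowCongr α.sortedEquiv (Equiv.refl (Fin n)) d) q) (c q.1))]
    apply Finset.prod_congr rfl
    intro r _
    simp only [Equiv.arrowCongr_apply, Equiv.refl_apply, Function.comp,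
      Equiv.symm_apply_apply]
    rfl
end GroodPartition


namespace GroodPartition
variable {N n : ℕ} (α : GroodPartition N n)

noncomputable def pairProd (c : Fin N → Fin n) : ℝ :=
  ∏ p ∈ Finset.univ.filter (fun p => p ∉ α.free ∧ p < α.pair p),
    if c p = c (α.pair p) then (1:ℝ) else 0

lemma pairProd_eq (c : Fin N → Fin n) : α.pairProd c
    = ∏ q ∈ α.S', if c q.1 = c (α.pr q).1 then (1:ℝ) else 0 := by
  rw [pairProd]
  refine (Finset.prod_bij (fun q _ => q.1) ?_ ?_ ?_ ?_).symm
  · intro q hq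
    simp [Finset.mem_filter, q.2, (α.mem_S').1 hq]
  · intro a _ b _ h
    exact Subtype.ext h
  · intro p hp
    simp only [Finset.mem_filter, Finset.mem_univ, true_and] at hp
    exact ⟨⟨p, hp.1⟩, α.mem_S'.2 hp.2, rfl⟩
  · intro q _
    rfl

lemma invariance (g : Matrix (Fin n) (Fin n) ℝ) (hg : gᵀ * g = 1) (hdet : g.det = 1)
    (c : Fin N → Fin n) :
    ∑ c' : Fin N → Fin n, (chiDet α c' * α.pairProd c') * ∏ p, g (c' p) (c p)
      = chiDet α c * α.pairProd c := by
  classical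
  set E := (Equiv.piEquivPiSubtypeProd (fun p : Fin N => p ∈ α.free) (fun _ => Fin n)) with hE
  rw [← Equiv.sum_comp E.symm
    (fun c' : Fin N → Fin n => (chiDet α c' * α.pairProd c') * ∏ p, g (c' p) (c p))]
  rw [Fintype.sum_prod_type]
  have key : ∀ (f₁ : {p : Fin N // p ∈ α.free} → Fin n)
      (f₂ : {p : Fin N // p ∉ α.free} → Fin n),
      (chiDet α (E.symm (f₁, f₂)) * α.pairProd (E.symm (f₁, f₂))) *
          ∏ p, g (E.symm (f₁, f₂) p) (c p)
      = ((Matrix.of fun a r : Fin n => if f₁ (α.sortedEquiv r) = a then (1:ℝ) else 0).det *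
            ∏ q : {p : Fin N // p ∈ α.free}, g (f₁ q) (c q.1)) *
        ((∏ q ∈ α.S', if f₂ q = f₂ (α.pr q) then (1:ℝ) else 0) *
            ∏ q : {p : Fin N // p ∉ α.free}, g (f₂ q) (c q.1)) := by
    intro f₁ f₂
    have hv1 : ∀ q : {p : Fin N // p ∈ α.free}, E.symm (f₁, f₂) q.1 = f₁ q := by
      intro q
      simp [hE, Equiv.piEquivPiSubtypeProd, q.2]
    have hv2 : ∀ q : {p : Fin N // p ∉ α.free}, E.symm (f₁, f₂) q.1 = f₂ q := by
      intro q
      simp [hE, Equiv.piEquivPiSubtypeProd, q.2]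
    have h1 : chiDet α (E.symm (f₁, f₂))
        = (Matrix.of fun a r : Fin n => if f₁ (α.sortedEquiv r) = a then (1:ℝ) else 0).det := by
      unfold chiDet
      congr 1
      ext a r
      simp only [Matrix.of_apply]
      rw [show E.symm (f₁, f₂) (α.sorted r) = f₁ (α.sortedEquiv r) from hv1 (α.sortedEquiv r)]
    have h2 : α.pairProd (E.symm (f₁, f₂))
        = ∏ q ∈ α.S', if f₂ q = f₂ (α.pr q) then (1:ℝ) else 0 := by
      rw [α.pairProd_eq]
      apply Finset.prod_congr rfl
      intro q _
      rw [hv2 q, hv2 (α.pr q)]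
    have h3 : (∏ p, g (E.symm (f₁, f₂) p) (c p))
        = (∏ q : {p : Fin N // p ∈ α.free}, g (f₁ q) (c q.1)) *
          ∏ q : {p : Fin N // p ∉ α.free}, g (f₂ q) (c q.1) := by
      rw [← Fintype.prod_subtype_mul_prod_subtype (fun p : Fin N => p ∈ α.free)
        (fun p => g (E.symm (f₁, f₂) p) (c p))]
      congr 1
      · exact Finset.prod_congr (by congr!) (fun q _ => by rw [hv1 q])
      · exact Finset.prod_congr (by congr!) (fun q _ => by rw [hv2 q])
    rw [h1, h2, h3]
    ring
  simp only [key]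
  rw [← Finset.sum_mul_sum]
  rw [α.chi_side g c, hdet, one_mul, α.delta_side g hg (fun q => c q.1), α.pairProd_eq]
  rfl
end GroodPartition



lemma tpowM_mul {n : ℕ} (k : ℕ) (g h : Matrix (Fin n) (Fin n) ℝ) :
    tpowM k g * tpowM k h = tpowM k (g * h) := by
  ext I J
  rw [Matrix.mul_apply]
  simp only [tpowM, Matrix.of_apply, ← Finset.prod_mul_distrib]
  have := Finset.prod_univ_sum (fun _ : Fin k => (Finset.univ : Finset (Fin n)))
    (fun r b => g (I r) b * h b (J r))
  rw [Fintype.piFinset_univ] at this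
  rw [← this]
  apply Finset.prod_congr rfl
  intro r _
  rw [Matrix.mul_apply]

lemma tpowM_one {n : ℕ} (k : ℕ) : tpowM k (1 : Matrix (Fin n) (Fin n) ℝ) = 1 := by
  ext I J
  simp only [tpowM, Matrix.of_apply]
  by_cases h : I = J
  · subst h
    simp [Matrix.one_apply]
  · obtain ⟨r, hr⟩ := Function.ne_iff.1 h
    rw [Matrix.one_apply_ne h]
    exact Finset.prod_eq_zero (Finset.mem_univ r) (by simp [Matrix.one_apply, hr])

def appendEquiv (n k l : ℕ) : ((Fin l → Fin n) × (Fin k → Fin n)) ≃ (Fin (l + k) → Fin n) where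
  toFun x := Fin.append x.1 x.2
  invFun c := (fun t => c (Fin.castAdd k t), fun r => c (Fin.natAdd l r))
  left_inv := fun x => by
    obtain ⟨u, v⟩ := x
    simp only [Prod.mk.injEq]
    exact ⟨funext fun t => Fin.append_left u v t, funext fun r => Fin.append_right u v r⟩
  right_inv := fun c => by
    funext p
    exact Fin.addCases (fun i => Fin.append_left _ _ i) (fun i => Fin.append_right _ _ i) p

lemma sandwich {n k l : ℕ} (α : GroodPartition (l + k) n) (g : Matrix (Fin n) (Fin n) ℝ)
    (hg : gᵀ * g = 1) (hdet : g.det = 1) :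
    tpowM l gᵀ * (groodMatrix n k l α * tpowM k g) = groodMatrix n k l α := by
  ext I J
  rw [Matrix.mul_apply]
  simp only [Matrix.mul_apply]
  have step1 : ∀ I' : Fin l → Fin n,
      tpowM l gᵀ I I' * ∑ J' : Fin k → Fin n, groodMatrix n k l α I' J' * tpowM k g J' J
      = ∑ J' : Fin k → Fin n,
          (chiDet α (Fin.append I' J') * α.pairProd (Fin.append I' J')) *
            ∏ p, g (Fin.append I' J' p) (Fin.append I J p) := by
    intro I'
    rw [Finset.mul_sum]
    apply Finset.sum_congr rfl
    intro J' _
    have hsplit : (∏ p, g (Fin.append I' J' p) (Fin.append I J p))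
        = (∏ t, g (I' t) (I t)) * ∏ r, g (J' r) (J r) := by
      rw [Fin.prod_univ_add]
      congr 1
      · exact Finset.prod_congr rfl fun t _ => by
          rw [Fin.append_left, Fin.append_left]
      · exact Finset.prod_congr rfl fun r _ => by
          rw [Fin.append_right, Fin.append_right]
    have h1 : tpowM l gᵀ I I' = ∏ t, g (I' t) (I t) := by
      simp [tpowM, Matrix.transpose_apply]
    have h2 : groodMatrix n k l α I' J'
        = chiDet α (Fin.append I' J') * α.pairProd (Fin.append I' J') := rfl
    have h3 : tpowM k g J' J = ∏ r, g (J' r) (J r) := rfl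
    rw [h1, h2, h3, hsplit]
    ring
  simp only [step1]
  rw [← Fintype.sum_prod_type']
  refine Eq.trans (Fintype.sum_equiv (appendEquiv n k l) _
    (fun c' => (chiDet α c' * α.pairProd c') * ∏ p, g (c' p) (Fin.append I J p))
    (fun x => rfl)) ?_
  rw [α.invariance g hg hdet (Fin.append I J)]
  rfl

/-- For `n ≤ l + k` with `n ≡ l + k (mod 2)`, each `H_α` is `SO(n)`-equivariant. -/
theorem stmt10 (n k l : ℕ) (hn : 1 ≤ n) (hle : n ≤ l + k)
    (hmod : n % 2 = (l + k) % 2) (α : GroodPartition (l + k) n) :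
    IsGEquiv k l (fun g => gᵀ * g = 1 ∧ g.det = 1)
      (groodMatrix n k l α).mulVecLin := by
  rintro g ⟨hg, hdet⟩
  have h1 : tpowM l g * tpowM l gᵀ = 1 := by
    rw [tpowM_mul, mul_eq_one_comm.1 hg, tpowM_one]
  have hmat : groodMatrix n k l α * tpowM k g = tpowM l g * groodMatrix n k l α := by
    calc groodMatrix n k l α * tpowM k g
        = (1 : Matrix (Fin l → Fin n) (Fin l → Fin n) ℝ) *
            (groodMatrix n k l α * tpowM k g) := (Matrix.one_mul _).symm
      _ = (tpowM l g * tpowM l gᵀ) * (groodMatrix n k l α * tpowM k g) := by rw [h1]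
      _ = tpowM l g * (tpowM l gᵀ * (groodMatrix n k l α * tpowM k g)) :=
          Matrix.mul_assoc _ _ _
      _ = tpowM l g * groodMatrix n k l α := by rw [sandwich α g hg hdet]
  rw [← Matrix.mulVecLin_mul, ← Matrix.mulVecLin_mul, hmat]
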